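/- Let ⟨·,·⟩ be an inner product on complex polynomials induced by an infinite Hermitian positive definite matrix and suppose the multiplication operator D is bounded. Then for every n ≥ 1, the n-th orthogonal polynomial φₙ (monic, say) satisfies: φₙ has exactly n zeros counted with multiplicity, all lying in the open disk of radius ‖D‖ centered at 0. -/

import Mathlib

open Polynomial

/-- If the multiplication operator is bounded with norm `Dn` for an inner
product on complex polynomials, then for every `n ≥ 1` the monic `n`-th orthogonal
polynomial has exactly `n` roots counted with multiplicity, all lying in the open disk
of radius `Dn` centered at `0`. -/
theorem stmt_15 (ip : Polynomial ℂ → Polynomial ℂ → ℂ)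
    (hadd : ∀ p q r : Polynomial ℂ, ip (p + q) r = ip p r + ip q r)
    (hsmul : ∀ (a : ℂ) (p q : Polynomial ℂ), ip (a • p) q = a * ip p q)
    (hsymm : ∀ p q : Polynomial ℂ, ip q p = (starRingEnd ℂ) (ip p q))
    (hdef : ∀ p : Polynomial ℂ, p ≠ 0 → 0 < (ip p p).re)
    (Dn : ℝ) (hDn : 0 ≤ Dn)
    (hbound : ∀ p : Polynomial ℂ, (ip (X * p) (X * p)).re ≤ Dn ^ 2 * (ip p p).re)
    (n : ℕ) (hn : 1 ≤ n) (φ : Polynomial ℂ) (hmonic : φ.Monic) (hdeg : φ.natDegree = n)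
    (horth : ∀ q : Polynomial ℂ, q.degree < n → ip φ q = 0) :
    Multiset.card φ.roots = n ∧ ∀ z₀ ∈ φ.roots, ‖z₀‖ < Dn := by
  have hφ0 : φ ≠ 0 := hmonic.ne_zero
  -- conjugate linearity in the second argument
  have hadd' : ∀ p q r : Polynomial ℂ, ip p (q + r) = ip p q + ip p r := by
    intro p q r
    rw [hsymm (q + r) p, hadd, map_add, ← hsymm q p, ← hsymm r p]
  have hsmul' : ∀ (a : ℂ) (p q : Polynomial ℂ),
      ip p (a • q) = (starRingEnd ℂ) a * ip p q := by
    intro a p q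
    rw [hsymm (a • q) p, hsmul, map_mul, ← hsymm q p]
  constructor
  · rw [← hdeg]
    exact (splits_iff_card_roots.mp (IsAlgClosed.splits φ))
  · intro z₀ hz₀
    have hroot : IsRoot φ z₀ := isRoot_of_mem_roots hz₀
    set P : Polynomial ℂ := φ /ₘ (X - C z₀) with hP
    have hfac : (X - C z₀) * P = φ := mul_divByMonic_eq_iff_isRoot.mpr hroot
    have hPne : P ≠ 0 := by
      intro h
      rw [h, mul_zero] at hfac
      exact hφ0 hfac.symm
    have hPdeg : P.natDegree = n - 1 := by
      rw [hP, natDegree_divByMonic φ (monic_X_sub_C z₀), hdeg, natDegree_X_sub_C]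
    have hPdeg' : P.degree < n := by
      calc P.degree ≤ (P.natDegree : WithBot ℕ) := degree_le_natDegree
        _ < (n : WithBot ℕ) := by
            rw [hPdeg]; exact_mod_cast Nat.sub_lt (by omega) one_pos
    have horthP : ip φ P = 0 := horth P hPdeg'
    have horthP' : ip P φ = 0 := by rw [hsymm, horthP, map_zero]
    -- X * P = φ + z₀ • P
    have hXP : X * P = φ + z₀ • P := by
      rw [← hfac, smul_eq_C_mul]
      ring
    have hexp : ip (X * P) (X * P) = ip φ φ + (z₀ * (starRingEnd ℂ) z₀) * ip P P := by
      rw [hXP]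
      simp only [hadd, hadd', hsmul, hsmul', horthP, horthP']
      ring
    have hre : (ip (X * P) (X * P)).re = (ip φ φ).re + Complex.normSq z₀ * (ip P P).re := by
      rw [hexp]
      have : z₀ * (starRingEnd ℂ) z₀ = (Complex.normSq z₀ : ℂ) := by
        rw [Complex.mul_conj]
      rw [this]
      simp [Complex.add_re, Complex.mul_re]
    have hB : 0 < (ip P P).re := hdef P hPne
    have hA : 0 < (ip φ φ).re := hdef φ hφ0
    have hlt : Complex.normSq z₀ * (ip P P).re < Dn ^ 2 * (ip P P).re := by
      have := hbound P
      rw [hre] at this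
      linarith
    have hsq : Complex.normSq z₀ < Dn ^ 2 := lt_of_mul_lt_mul_right hlt hB.le
    have : (‖z₀‖) ^ 2 < Dn ^ 2 := by rwa [Complex.sq_norm]
    exact lt_of_pow_lt_pow_left₀ 2 hDn this
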